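/- In the semigroup Q(a,b), every generator of the form [i_1, …, i_k, 0, i_{k+2}, …, i_{a+b−1}] (having a zero entry in position k+1) factors as [i_1,…,i_k,0,…,0] + [0,…,0,i_{k+2},…,i_{a+b−1}]; consequently, Q(a,b) is generated by the tuples that are unbroken strings of nonzero entries (padded by zeros), i.e., by the set Y_{a,b} ⊆ X_{a,b} of tuples whose nonzero entries form a consecutive block. -/

import Mathlib

/-- The set of admissible tuples over `ℤ/mℤ` (endpoints in `{m, m-1} = {0, m-1}` mod `m`,
differences `{0,1}` then `{0,-1}`). -/
def Xab (m a b : ℕ) : Set (Fin (a + b - 1) → ZMod m) :=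
  {i | ∃ h0 : 0 < a + b - 1, ∃ hl : a + b - 2 < a + b - 1,
    i ⟨0, h0⟩ ∈ ({0, ((m - 1 : ℕ) : ZMod m)} : Set (ZMod m)) ∧
    i ⟨a + b - 2, hl⟩ ∈ ({0, ((m - 1 : ℕ) : ZMod m)} : Set (ZMod m)) ∧
    ∀ (k : ℕ) (hk : k + 1 < a + b - 1),
      (k < a - 1 → i ⟨k, by omega⟩ - i ⟨k + 1, hk⟩ ∈ ({0, 1} : Set (ZMod m))) ∧
      (a - 1 ≤ k → i ⟨k, by omega⟩ - i ⟨k + 1, hk⟩ ∈ ({0, -1} : Set (ZMod m)))}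

/-- `Y_{a,b} ⊆ X_{a,b}`: the tuples whose nonzero entries form a consecutive block. -/
def Yab (m a b : ℕ) : Set (Fin (a + b - 1) → ZMod m) :=
  {i ∈ Xab m a b | ∀ j k l : Fin (a + b - 1), j ≤ k → k ≤ l →
      i j ≠ 0 → i l ≠ 0 → i k ≠ 0}

/-- Ambient product of the free Pieri monoids at the internal vertices. -/
abbrev BigM (m a b : ℕ) := Fin (a + b - 2) → ((ZMod m × ZMod m) →₀ ℕ)

/-- Validity of a Pieri generator label at slot `s` (the label `(0,0)` is the identity
`[0,…,0]` of `Q(a,b)` and is excluded as a generator). -/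
def validPairQ (m a b : ℕ) (s : ℕ) (p : ZMod m × ZMod m) : Prop :=
  p ≠ (0, 0) ∧
  (s < a - 1 → p.1 - p.2 ∈ ({0, 1} : Set (ZMod m))) ∧
  (a - 1 ≤ s → p.1 - p.2 ∈ ({0, -1} : Set (ZMod m))) ∧
  (s = 0 → p.1 ∈ ({0, ((m - 1 : ℕ) : ZMod m)} : Set (ZMod m))) ∧
  (s = a + b - 3 → p.2 ∈ ({0, ((m - 1 : ℕ) : ZMod m)} : Set (ZMod m)))

/-- Boundary data of a slot element: the multiset of nonzero boundary labels extracted by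
`f` (the trivial label `0` contributes nothing, since `[0,0]` is the identity). -/
noncomputable def qBoundary (m : ℕ) (f : ZMod m × ZMod m → ZMod m)
    (x : (ZMod m × ZMod m) →₀ ℕ) : ZMod m →₀ ℕ :=
  x.sum (fun p c => if f p = 0 then 0 else Finsupp.single (f p) c)

/-- The embedding of a tuple as an element of `Q(a,b)`; a slot whose label is `(0,0)`
contributes the identity. -/
noncomputable def embQ (m a b : ℕ) (i : Fin (a + b - 1) → ZMod m) : BigM m a b :=
  fun s => match s with
  | ⟨sv, hs⟩ =>
      if (i ⟨sv, by omega⟩, i ⟨sv + 1, by omega⟩) = ((0 : ZMod m), (0 : ZMod m)) then 0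
      else Finsupp.single (i ⟨sv, by omega⟩, i ⟨sv + 1, by omega⟩) 1


lemma qB_zero (m : ℕ) (f : ZMod m × ZMod m → ZMod m) : qBoundary m f 0 = 0 :=
  Finsupp.sum_zero_index

lemma qB_single (m : ℕ) (f : ZMod m × ZMod m → ZMod m) (p : ZMod m × ZMod m) (c : ℕ) :
    qBoundary m f (Finsupp.single p c) =
      if f p = 0 then 0 else Finsupp.single (f p) c :=
  Finsupp.sum_single_index (by split <;> simp)

lemma qB_add (m : ℕ) (f : ZMod m × ZMod m → ZMod m) (u v : (ZMod m × ZMod m) →₀ ℕ) :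
    qBoundary m f (u + v) = qBoundary m f u + qBoundary m f v := by
  unfold qBoundary
  apply Finsupp.sum_add_index' <;> intros <;> split <;> simp [Finsupp.single_add]

lemma qB_ne (m : ℕ) (f : ZMod m × ZMod m → ZMod m) (u : (ZMod m × ZMod m) →₀ ℕ)
    (p : ZMod m × ZMod m) (hp : p ∈ u.support) (h : f p ≠ 0) :
    qBoundary m f u (f p) ≠ 0 := by
  have hup : u p ≠ 0 := Finsupp.mem_support_iff.1 hp
  have hle : u p ≤ (qBoundary m f u) (f p) := by
    rw [qBoundary, Finsupp.sum, Finsupp.finset_sum_apply]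
    have h2 := Finset.single_le_sum
      (f := fun q => (if f q = 0 then (0 : ZMod m →₀ ℕ) else Finsupp.single (f q) (u q)) (f p))
      (fun i _ => Nat.zero_le _) hp
    simpa [if_neg h] using h2
  omega

lemma qB_exists (m : ℕ) (f : ZMod m × ZMod m → ZMod m) (u : (ZMod m × ZMod m) →₀ ℕ)
    (v : ZMod m) (h : qBoundary m f u v ≠ 0) : ∃ p ∈ u.support, f p = v := by
  rw [qBoundary, Finsupp.sum, Finsupp.finset_sum_apply] at h
  obtain ⟨q, hq, hne⟩ := Finset.exists_ne_zero_of_sum_ne_zero h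
  refine ⟨q, hq, ?_⟩
  by_cases h0 : f q = 0
  · simp [h0] at hne
  · rw [if_neg h0] at hne
    by_contra hne2
    exact hne (Finsupp.single_eq_of_ne' hne2)

lemma embQ_apply (m a b : ℕ) (i : Fin (a + b - 1) → ZMod m) (s : ℕ) (hs : s < a + b - 2)
    (h1 : s < a + b - 1) (h2 : s + 1 < a + b - 1) :
    embQ m a b i ⟨s, hs⟩ =
      if (i ⟨s, h1⟩, i ⟨s + 1, h2⟩) = ((0 : ZMod m), (0 : ZMod m)) then 0
      else Finsupp.single (i ⟨s, h1⟩, i ⟨s + 1, h2⟩) 1 := rfl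

lemma embQ_bdry (m a b : ℕ) (i : Fin (a + b - 1) → ZMod m) (s : ℕ) (hs : s + 1 < a + b - 2) :
    qBoundary m Prod.snd (embQ m a b i ⟨s, by omega⟩)
      = qBoundary m Prod.fst (embQ m a b i ⟨s + 1, hs⟩) := by
  have h1 : s < a + b - 1 := by omega
  have h2 : s + 1 < a + b - 1 := by omega
  have h3 : s + 1 + 1 < a + b - 1 := by omega
  rw [embQ_apply m a b i s (by omega) h1 h2, embQ_apply m a b i (s+1) hs h2 h3]
  by_cases hv : i ⟨s+1, h2⟩ = 0
  · split_ifs <;> simp_all [qB_zero, qB_single, Prod.ext_iff]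
  · split_ifs <;> simp_all [qB_zero, qB_single, Prod.ext_iff]

lemma embQ_mem (m a b : ℕ) (i : Fin (a + b - 1) → ZMod m) (hi : i ∈ Xab m a b) :
    (∀ s : Fin (a + b - 2), ∀ p ∈ ((embQ m a b i) s).support, validPairQ m a b s p) ∧
    ∀ (s : ℕ) (hs : s + 1 < a + b - 2),
      qBoundary m Prod.snd (embQ m a b i ⟨s, by omega⟩)
        = qBoundary m Prod.fst (embQ m a b i ⟨s + 1, hs⟩) := by
  obtain ⟨h0, hl, hfirst, hlast, hdiff⟩ := hi
  constructor
  · rintro ⟨s, hs⟩ p hp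
    have h1 : s < a + b - 1 := by omega
    have h2 : s + 1 < a + b - 1 := by omega
    rw [embQ_apply m a b i s hs h1 h2] at hp
    split_ifs at hp with hc
    · simp at hp
    · rw [Finsupp.support_single_ne_zero _ one_ne_zero, Finset.mem_singleton] at hp
      subst hp
      refine ⟨by simpa [Prod.ext_iff] using hc, ?_, ?_, ?_, ?_⟩
      · intro hlt
        exact (hdiff s h2).1 hlt
      · intro hge
        exact (hdiff s h2).2 hge
      · intro hz
        simp only
        have : (⟨s, h1⟩ : Fin (a + b - 1)) = ⟨0, h0⟩ := Fin.ext (by simpa using hz)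
        rw [this]; exact hfirst
      · intro hz
        simp only
        have hz' : s = a + b - 3 := hz
        have : (⟨s + 1, h2⟩ : Fin (a + b - 1)) = ⟨a + b - 2, hl⟩ :=
          Fin.ext (show s + 1 = a + b - 2 by omega)
        rw [this]; exact hlast
  · intro s hs
    exact embQ_bdry m a b i s hs

open Classical in
noncomputable def qchain (m : ℕ) (xx : ℕ → ((ZMod m × ZMod m) →₀ ℕ)) (s0 : ℕ)
    (p0 : ZMod m × ZMod m) : ℕ → ZMod m × ZMod m
  | 0 => p0
  | (k+1) => if h : ∃ p ∈ (xx (s0 + k + 1)).support, p.1 = (qchain m xx s0 p0 k).2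
      then h.choose else 0

noncomputable def Wt (m a b : ℕ) (x : BigM m a b) : ℕ :=
  ∑ s, (x s).sum fun _ c => c

lemma Wt_add (m a b : ℕ) (x y : BigM m a b) : Wt m a b (x + y) = Wt m a b x + Wt m a b y := by
  unfold Wt
  rw [← Finset.sum_add_distrib]
  refine Finset.sum_congr rfl fun s _ => ?_
  exact Finsupp.sum_add_index' (fun _ => rfl) (fun _ _ _ => rfl)

lemma finsupp_add_cancel {α : Type*} {u v w z : α →₀ ℕ} (h : u + v = w + z) (h2 : v = z) :
    u = w := by
  subst h2
  ext a
  have := DFunLike.congr_fun h a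
  simp only [Finsupp.add_apply] at this
  omega

lemma mem_closure_of_conds (m a b : ℕ) (ha : 2 ≤ a) (hb : 2 ≤ b)
    (x : BigM m a b)
    (hv : ∀ s : Fin (a + b - 2), ∀ p ∈ (x s).support, validPairQ m a b s p)
    (hbd : ∀ (s : ℕ) (hs : s + 1 < a + b - 2),
      qBoundary m Prod.snd (x ⟨s, by omega⟩) = qBoundary m Prod.fst (x ⟨s + 1, hs⟩)) :
    x ∈ AddSubmonoid.closure (embQ m a b '' Yab m a b) := by
  classical
  suffices H : ∀ (W : ℕ) (x : BigM m a b), Wt m a b x = W →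
      (∀ s : Fin (a + b - 2), ∀ p ∈ (x s).support, validPairQ m a b s p) →
      (∀ (s : ℕ) (hs : s + 1 < a + b - 2),
        qBoundary m Prod.snd (x ⟨s, by omega⟩) = qBoundary m Prod.fst (x ⟨s + 1, hs⟩)) →
      x ∈ AddSubmonoid.closure (embQ m a b '' Yab m a b) by
    exact H _ x rfl hv hbd
  clear hv hbd x
  intro W
  induction W using Nat.strong_induction_on with
  | _ W IH =>
  intro x hW hv hbd
  by_cases hx0 : x = 0
  · subst hx0; exact AddSubmonoid.zero_mem _
  -- total version of x
  set xx : ℕ → ((ZMod m × ZMod m) →₀ ℕ) :=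
    fun s => if h : s < a + b - 2 then x ⟨s, h⟩ else 0 with hxxdef
  have hxxlt : ∀ (s : ℕ) (h : s < a + b - 2), xx s = x ⟨s, h⟩ := fun s h => dif_pos h
  have hxxge : ∀ (s : ℕ), ¬ s < a + b - 2 → xx s = 0 := fun s h => dif_neg h
  have hvx : ∀ (s : ℕ) (h : s < a + b - 2), ∀ p ∈ (xx s).support, validPairQ m a b s p := by
    intro s h p hp
    rw [hxxlt s h] at hp
    exact hv ⟨s, h⟩ p hp
  have hbdx : ∀ (s : ℕ), s + 1 < a + b - 2 →
      qBoundary m Prod.snd (xx s) = qBoundary m Prod.fst (xx (s + 1)) := by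
    intro s h
    rw [hxxlt s (by omega), hxxlt (s + 1) h]
    exact hbd s h
  -- minimal nonzero slot
  have hex : ∃ s, xx s ≠ 0 := by
    by_contra hc
    push_neg at hc
    apply hx0
    funext s
    have h1 := hc s.1
    rw [hxxlt s.1 s.2] at h1
    exact h1
  set s0 := Nat.find hex with hs0def
  have hs0 : xx s0 ≠ 0 := Nat.find_spec hex
  have hmin : ∀ s < s0, xx s = 0 := fun s hlt => not_not.1 (Nat.find_min hex hlt)
  have hs0lt : s0 < a + b - 2 := by
    by_contra hc
    exact hs0 (hxxge s0 hc)
  obtain ⟨p0, hp0⟩ := Finsupp.support_nonempty_iff.2 hs0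
  set C := qchain m xx s0 p0 with hCdef
  have hstopex : ∃ k, (C k).2 = 0 ∨ ¬ (s0 + k + 1 < a + b - 2) := ⟨a + b, Or.inr (by omega)⟩
  set K := Nat.find hstopex with hKdef
  have hstopK : (C K).2 = 0 ∨ ¬ (s0 + K + 1 < a + b - 2) := Nat.find_spec hstopex
  have hcont : ∀ k < K, (C k).2 ≠ 0 ∧ s0 + k + 1 < a + b - 2 := by
    intro k hk
    have h1 := Nat.find_min hstopex hk
    push_neg at h1
    exact h1
  -- the chain invariant
  have hboth : ∀ k, k ≤ K → C k ∈ (xx (s0 + k)).support ∧ ∀ _ : k ≠ 0, (C k).1 = (C (k - 1)).2 := by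
    intro k
    induction k with
    | zero => exact fun _ => ⟨by rw [Nat.add_zero]; exact hp0, fun h => absurd rfl h⟩
    | succ k ih =>
      intro hk1
      have hk : k < K := by omega
      obtain ⟨hmem, -⟩ := ih (by omega)
      obtain ⟨hne0, hlt2⟩ := hcont k hk
      have hq : qBoundary m Prod.snd (xx (s0 + k)) ((C k).2) ≠ 0 :=
        qB_ne m Prod.snd _ _ hmem hne0
      rw [hbdx (s0 + k) hlt2] at hq
      have hex2 : ∃ p ∈ (xx (s0 + k + 1)).support, p.1 = (C k).2 := by
        obtain ⟨p, hp, hfp⟩ := qB_exists m Prod.fst _ _ hq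
        exact ⟨p, hp, hfp⟩
      have hCk1 : C (k + 1) = hex2.choose := by
        show qchain m xx s0 p0 (k + 1) = hex2.choose
        rw [qchain]
        rw [dif_pos hex2]
      obtain ⟨hm2, hf2⟩ := hex2.choose_spec
      constructor
      · rw [hCk1]; exact hm2
      · intro _
        simp only [Nat.add_sub_cancel]
        rw [hCk1]; exact hf2
  have hmemk : ∀ k, k ≤ K → C k ∈ (xx (s0 + k)).support := fun k hk => (hboth k hk).1
  have hlink : ∀ k < K, (C (k + 1)).1 = (C k).2 := by
    intro k hk
    have h1 := (hboth (k + 1) (by omega)).2 (by omega)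
    simpa using h1
  have hKlt : s0 + K < a + b - 2 := by
    by_contra hc
    have h1 := hmemk K le_rfl
    rw [hxxge _ hc] at h1
    simp at h1
  have hvC : ∀ k, k ≤ K → validPairQ m a b (s0 + k) (C k) := fun k hk =>
    hvx (s0 + k) (by omega) _ (hmemk k hk)
  have hCne : ∀ k, k ≤ K → C k ≠ ((0 : ZMod m), (0 : ZMod m)) := fun k hk => (hvC k hk).1
  -- if s0 > 0 then the chain starts with first coordinate 0
  have hfirst0 : s0 ≠ 0 → (C 0).1 = 0 := by
    intro hne
    by_contra hc
    have h1 : s0 - 1 + 1 < a + b - 2 := by omega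
    have hz : qBoundary m Prod.snd (xx (s0 - 1)) = 0 := by
      rw [hmin (s0 - 1) (by omega)]
      exact qB_zero m _
    have h2 := hbdx (s0 - 1) h1
    rw [hz] at h2
    rw [show s0 - 1 + 1 = s0 by omega] at h2
    have h3 : C 0 ∈ (xx s0).support := by simpa using hmemk 0 (Nat.zero_le K)
    exact qB_ne m Prod.fst (xx s0) (C 0) h3 hc (by rw [← h2]; simp)
  -- the tuple
  set i0 : ℕ → ZMod m := fun j =>
    if j < s0 then 0
    else if j ≤ s0 + K then (C (j - s0)).1
    else if j = s0 + K + 1 then (C K).2 else 0 with hi0def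
  set i : Fin (a + b - 1) → ZMod m := fun j => i0 j.1 with hidef
  have hi0lt : ∀ j, j < s0 → i0 j = 0 := by
    intro j hj; simp only [hi0def]; rw [if_pos hj]
  have hi0mid : ∀ j, s0 ≤ j → j ≤ s0 + K → i0 j = (C (j - s0)).1 := by
    intro j h1 h2; simp only [hi0def]; rw [if_neg (by omega), if_pos h2]
  have hi0end : i0 (s0 + K + 1) = (C K).2 := by
    simp only [hi0def]; rw [if_neg (by omega), if_neg (by omega)]; simp
  have hi0gt : ∀ j, s0 + K + 1 < j → i0 j = 0 := by
    intro j hj; simp only [hi0def]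
    rw [if_neg (by omega), if_neg (by omega), if_neg (by omega)]
  -- the pair picked out at each slot
  have hpair : ∀ s, s < a + b - 2 →
      (i0 s, i0 (s + 1)) = if s0 ≤ s ∧ s ≤ s0 + K then C (s - s0) else ((0:ZMod m), (0:ZMod m)) := by
    intro s hs
    by_cases h1 : s < s0
    · rw [if_neg (by omega)]
      have e1 : i0 s = 0 := hi0lt s h1
      have e2 : i0 (s + 1) = 0 := by
        by_cases h2 : s + 1 < s0
        · exact hi0lt _ h2
        · have h3 : s + 1 = s0 := by omega
          rw [h3, hi0mid s0 le_rfl (by omega), Nat.sub_self]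
          exact hfirst0 (by omega)
      rw [e1, e2]
    · by_cases h2 : s ≤ s0 + K
      · rw [if_pos ⟨by omega, h2⟩]
        have e1 : i0 s = (C (s - s0)).1 := hi0mid s (by omega) h2
        have e2 : i0 (s + 1) = (C (s - s0)).2 := by
          by_cases h3 : s + 1 ≤ s0 + K
          · rw [hi0mid (s + 1) (by omega) h3]
            rw [show s + 1 - s0 = (s - s0) + 1 by omega]
            exact hlink (s - s0) (by omega)
          · rw [show s + 1 = s0 + K + 1 by omega, hi0end,
              show s - s0 = K by omega]
        rw [e1, e2]
      · rw [if_neg (by omega)]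
        have e1 : i0 s = 0 := by
          by_cases h3 : s = s0 + K + 1
          · rw [h3, hi0end]
            rcases hstopK with h4 | h4
            · exact h4
            · omega
          · exact hi0gt s (by omega)
        have e2 : i0 (s + 1) = 0 := hi0gt (s + 1) (by omega)
        rw [e1, e2]
  have hemb : ∀ (s : ℕ) (hs : s < a + b - 2),
      embQ m a b i ⟨s, hs⟩ =
        if s0 ≤ s ∧ s ≤ s0 + K then Finsupp.single (C (s - s0)) 1 else 0 := by
    intro s hs
    have hA : s < a + b - 1 := by omega
    have hB : s + 1 < a + b - 1 := by omega
    rw [embQ_apply m a b i s hs hA hB]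
    have hred : (i ⟨s, hA⟩, i ⟨s + 1, hB⟩) = (i0 s, i0 (s + 1)) := rfl
    rw [hred, hpair s hs]
    by_cases hc : s0 ≤ s ∧ s ≤ s0 + K
    · rw [if_pos hc, if_pos hc, if_neg (hCne (s - s0) (by omega))]
    · rw [if_neg hc, if_neg hc]; simp
  have hle : ∀ s : Fin (a + b - 2), embQ m a b i s ≤ x s := by
    rintro ⟨s, hs⟩
    rw [hemb s hs]
    split_ifs with hc
    · rw [Finsupp.single_le_iff]
      have h1 : C (s - s0) ∈ (xx s).support := by
        have h2 := hmemk (s - s0) (by omega)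
        rwa [show s0 + (s - s0) = s by omega] at h2
      rw [hxxlt s hs] at h1
      exact Nat.one_le_iff_ne_zero.2 (Finsupp.mem_support_iff.1 h1)
    · exact zero_le
  have hiX : i ∈ Xab m a b := by
    refine ⟨by omega, by omega, ?_, ?_, ?_⟩
    · show i0 0 ∈ _
      by_cases h0 : s0 = 0
      · rw [hi0mid 0 (by omega) (by omega)]
        have h1 := (hvC 0 (Nat.zero_le _)).2.2.2.1 (by omega)
        rw [show (0 : ℕ) - s0 = 0 by omega]
        exact h1
      · rw [hi0lt 0 (by omega)]
        exact Set.mem_insert _ _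
    · show i0 (a + b - 2) ∈ _
      by_cases hend : a + b - 2 = s0 + K + 1
      · rw [hend, hi0end]
        exact (hvC K le_rfl).2.2.2.2 (by omega)
      · rw [hi0gt (a + b - 2) (by omega)]
        exact Set.mem_insert _ _
    · intro k hk
      have hk2 : k < a + b - 2 := by omega
      have hp := hpair k hk2
      by_cases hc : s0 ≤ k ∧ k ≤ s0 + K
      · rw [if_pos hc] at hp
        have h5a : i0 k = (C (k - s0)).1 := congrArg Prod.fst hp
        have h5b : i0 (k + 1) = (C (k - s0)).2 := congrArg Prod.snd hp
        constructor
        · intro hlt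
          show i0 k - i0 (k + 1) ∈ _
          rw [h5a, h5b]
          have h6 := (hvC (k - s0) (by omega)).2.1 (by omega)
          exact h6
        · intro hge
          show i0 k - i0 (k + 1) ∈ _
          rw [h5a, h5b]
          have h6 := (hvC (k - s0) (by omega)).2.2.1 (by omega)
          exact h6
      · rw [if_neg hc] at hp
        have h5a : i0 k = 0 := congrArg Prod.fst hp
        have h5b : i0 (k + 1) = 0 := congrArg Prod.snd hp
        constructor
        · intro hlt
          show i0 k - i0 (k + 1) ∈ _
          rw [h5a, h5b, sub_zero]
          exact Set.mem_insert _ _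
        · intro hge
          show i0 k - i0 (k + 1) ∈ _
          rw [h5a, h5b, sub_zero]
          exact Set.mem_insert _ _
  have hiY : i ∈ Yab m a b := by
    refine ⟨hiX, ?_⟩
    intro j k l hjk hkl hj hl
    have f3 : ∀ t : ℕ, s0 < t → t ≤ s0 + K → i0 t ≠ 0 := by
      intro t h1 h2
      rw [hi0mid t (by omega) h2]
      rw [show t - s0 = (t - s0 - 1) + 1 by omega, hlink (t - s0 - 1) (by omega)]
      exact (hcont (t - s0 - 1) (by omega)).1
    have hj' : s0 ≤ j.1 := by
      by_contra hc
      exact hj (hi0lt j.1 (by omega))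
    have hl' : l.1 ≤ s0 + K + 1 := by
      by_contra hc
      exact hl (hi0gt l.1 (by omega))
    rcases eq_or_lt_of_le hjk with he | hlt1
    · exact he ▸ hj
    rcases eq_or_lt_of_le hkl with he2 | hlt2
    · exact he2 ▸ hl
    have hb1 : s0 < k.1 := by
      have := Fin.lt_def.1 hlt1
      omega
    have hb2 : k.1 ≤ s0 + K := by
      have := Fin.lt_def.1 hlt2
      omega
    exact f3 k.1 hb1 hb2
  -- decompose
  set y : BigM m a b := x - embQ m a b i with hydef
  have heq : x = y + embQ m a b i := by
    funext s
    show x s = (x - embQ m a b i) s + embQ m a b i s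
    rw [Pi.sub_apply]
    exact (tsub_add_cancel_of_le (hle s)).symm
  have hWemb : 1 ≤ Wt m a b (embQ m a b i) := by
    have hterm : ((embQ m a b i) ⟨s0, hs0lt⟩).sum (fun _ c => c) = 1 := by
      rw [hemb s0 hs0lt, if_pos ⟨le_rfl, by omega⟩]
      exact Finsupp.sum_single_index rfl
    calc 1 = _ := hterm.symm
      _ ≤ Wt m a b (embQ m a b i) :=
        Finset.single_le_sum (f := fun s => ((embQ m a b i) s).sum fun _ c => c)
          (fun _ _ => Nat.zero_le _) (Finset.mem_univ (⟨s0, hs0lt⟩ : Fin (a + b - 2)))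
  have hWy : Wt m a b y < W := by
    have h1 := Wt_add m a b y (embQ m a b i)
    rw [← heq] at h1
    omega
  have hvy : ∀ s : Fin (a + b - 2), ∀ p ∈ (y s).support, validPairQ m a b s p := by
    intro s p hp
    have h1 : y s p ≤ x s p := by
      rw [hydef, Pi.sub_apply, Finsupp.tsub_apply]
      exact Nat.sub_le _ _
    have h2 : y s p ≠ 0 := Finsupp.mem_support_iff.1 hp
    exact hv s p (Finsupp.mem_support_iff.2 (by omega))
  have hbdy : ∀ (s : ℕ) (hs : s + 1 < a + b - 2),
      qBoundary m Prod.snd (y ⟨s, by omega⟩) = qBoundary m Prod.fst (y ⟨s + 1, hs⟩) := by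
    intro s hs
    have hs' : s < a + b - 2 := by omega
    show qBoundary m Prod.snd (y ⟨s, hs'⟩) = qBoundary m Prod.fst (y ⟨s + 1, hs⟩)
    have e3 : qBoundary m Prod.snd (embQ m a b i ⟨s, hs'⟩)
        = qBoundary m Prod.fst (embQ m a b i ⟨s + 1, hs⟩) := embQ_bdry m a b i s hs
    have ex : qBoundary m Prod.snd (x ⟨s, hs'⟩) = qBoundary m Prod.fst (x ⟨s + 1, hs⟩) :=
      hbd s hs
    have e1 : qBoundary m Prod.snd (x ⟨s, hs'⟩)
        = qBoundary m Prod.snd (y ⟨s, hs'⟩) + qBoundary m Prod.snd (embQ m a b i ⟨s, hs'⟩) := by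
      rw [show x ⟨s, hs'⟩ = y ⟨s, hs'⟩ + embQ m a b i ⟨s, hs'⟩ from congrFun heq _]
      exact qB_add m _ _ _
    have e2 : qBoundary m Prod.fst (x ⟨s + 1, hs⟩)
        = qBoundary m Prod.fst (y ⟨s + 1, hs⟩) + qBoundary m Prod.fst (embQ m a b i ⟨s + 1, hs⟩) := by
      rw [show x ⟨s + 1, hs⟩ = y ⟨s + 1, hs⟩ + embQ m a b i ⟨s + 1, hs⟩ from congrFun heq _]
      exact qB_add m _ _ _
    refine finsupp_add_cancel ?_ e3
    rw [← e1, ← e2]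
    exact ex
  rw [heq]
  exact AddSubmonoid.add_mem _ (IH (Wt m a b y) hWy y rfl hvy hbdy)
    (AddSubmonoid.subset_closure ⟨i, hiY, rfl⟩)

/-- In `Q(a,b)`, every generator with a zero entry at some position
`t` factors as the sum of its truncation up to `t` and its truncation after `t`;
consequently `Q(a,b)` is generated by the tuples of `Y_{a,b}`, those whose nonzero
entries form an unbroken string. -/
theorem Qab_generated_by_unbroken_strings (m a b : ℕ) (hm : 2 ≤ m) (ha : 2 ≤ a)
    (hb : 2 ≤ b)
    (Qab : AddSubmonoid (BigM m a b))
    (hQab : (Qab : Set (BigM m a b)) =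
      {x | (∀ s : Fin (a + b - 2), ∀ p ∈ (x s).support, validPairQ m a b s p) ∧
        ∀ (s : ℕ) (hs : s + 1 < a + b - 2),
          qBoundary m Prod.snd (x ⟨s, by omega⟩)
            = qBoundary m Prod.fst (x ⟨s + 1, hs⟩)}) :
    (∀ i ∈ Xab m a b, ∀ t : Fin (a + b - 1), i t = 0 →
      embQ m a b i =
        embQ m a b (fun j => if j < t then i j else 0) +
        embQ m a b (fun j => if t < j then i j else 0)) ∧
    AddSubmonoid.closure (embQ m a b '' Yab m a b) = Qab := by
  constructor
  · rintro i - ⟨tv, htv⟩ ht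
    funext s
    obtain ⟨sv, hs⟩ := s
    have hA : sv < a + b - 1 := by omega
    have hB : sv + 1 < a + b - 1 := by omega
    rw [Pi.add_apply, embQ_apply m a b i sv hs hA hB,
        embQ_apply m a b _ sv hs hA hB, embQ_apply m a b _ sv hs hA hB]
    simp only [Fin.mk_lt_mk]
    by_cases h1 : sv + 1 < tv
    · rw [if_pos (show sv < tv by omega), if_pos h1,
        if_neg (show ¬ tv < sv by omega), if_neg (show ¬ tv < sv + 1 by omega)]
      simp
    · by_cases h2 : sv + 1 = tv
      · have hB0 : i ⟨sv + 1, hB⟩ = 0 := by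
          have he : (⟨sv + 1, hB⟩ : Fin (a + b - 1)) = ⟨tv, htv⟩ := Fin.ext h2
          rw [he]; exact ht
        rw [if_pos (show sv < tv by omega), if_neg (show ¬ sv + 1 < tv by omega),
          if_neg (show ¬ tv < sv by omega), if_neg (show ¬ tv < sv + 1 by omega), hB0]
        simp
      · by_cases h3 : sv = tv
        · have hA0 : i ⟨sv, hA⟩ = 0 := by
            have he : (⟨sv, hA⟩ : Fin (a + b - 1)) = ⟨tv, htv⟩ := Fin.ext h3
            rw [he]; exact ht
          rw [if_neg (show ¬ sv < tv by omega), if_neg (show ¬ sv + 1 < tv by omega),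
            if_neg (show ¬ tv < sv by omega), if_pos (show tv < sv + 1 by omega), hA0]
          simp
        · rw [if_neg (show ¬ sv < tv by omega), if_neg (show ¬ sv + 1 < tv by omega),
            if_pos (show tv < sv by omega), if_pos (show tv < sv + 1 by omega)]
          simp
  · apply le_antisymm
    · apply (AddSubmonoid.closure_le).2
      rintro _ ⟨i, hiY, rfl⟩
      show embQ m a b i ∈ (Qab : Set (BigM m a b))
      rw [hQab]
      exact embQ_mem m a b i hiY.1
    · intro x hx
      rw [← SetLike.mem_coe, hQab] at hx
      exact mem_closure_of_conds m a b ha hb x hx.1 hx.2
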